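/- Let dμ(x;t) be an even symmetric matrix measure with ∂_t dμ = x^2 dμ, and Q_n(x;t) its monic matrix orthogonal polynomials. Then ∂_t Q_{2n} = α_n Q_{2n-2} and ∂_t Q_{2n+1} = β_n Q_{2n-1}, where α_n = -H_n^{(0)} (H_{n-1}^{(0)})^{-1} and β_n = -H_n^{(1)} (H_{n-1}^{(1)})^{-1}. -/

import Mathlib

open Polynomial Finset Matrix

/-- `⟨f,g⟩ = Σ_{i,j} f_i m_{i+j} g_jᵀ` in terms of moments. -/
noncomputable def ip16 {p : ℕ} (m : ℕ → Matrix (Fin p) (Fin p) ℝ)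
    (f g : Polynomial (Matrix (Fin p) (Fin p) ℝ)) : Matrix (Fin p) (Fin p) ℝ :=
  ∑ i ∈ range (f.natDegree + 1), ∑ j ∈ range (g.natDegree + 1),
    f.coeff i * m (i + j) * (g.coeff j)ᵀ

namespace Stmt16

variable {p : ℕ}

abbrev Mat (p : ℕ) := Matrix (Fin p) (Fin p) ℝ

lemma neg_one_pow_mod (a b : ℕ) (h : a % 2 = b % 2) : ((-1 : ℝ)) ^ a = (-1 : ℝ) ^ b := by
  rcases Nat.even_or_odd a with ha | ha
  · have hb : Even b := Nat.even_iff.mpr (by rw [← h]; exact Nat.even_iff.mp ha)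
    rw [ha.neg_one_pow, hb.neg_one_pow]
  · have hb : Odd b := Nat.odd_iff.mpr (by rw [← h]; exact Nat.odd_iff.mp ha)
    rw [ha.neg_one_pow, hb.neg_one_pow]

noncomputable def pair16 (m : ℕ → Mat p) (g : ℕ → Mat p) (N k : ℕ) : Mat p :=
  ∑ a ∈ range N, g a * m (a + k)

lemma pair16_extend (m : ℕ → Mat p) (g : ℕ → Mat p) {N N' k : ℕ}
    (hg : ∀ a, N ≤ a → g a = 0) (h : N ≤ N') :
    pair16 m g N' k = pair16 m g N k := by
  refine (Finset.sum_subset (range_subset_range.mpr h) ?_).symm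
  intro a _ ha
  rw [hg a (by simpa using ha), zero_mul]

lemma ip16_X_pow [Nonempty (Fin p)] (m : ℕ → Mat p) (f : Polynomial (Mat p)) (k N : ℕ)
    (hN : f.natDegree < N) : ip16 m f (X ^ k) = pair16 m f.coeff N k := by
  have h1 : ip16 m f (X ^ k) = pair16 m f.coeff (f.natDegree + 1) k := by
    unfold ip16 pair16
    rw [natDegree_X_pow]
    refine Finset.sum_congr rfl fun i _ => ?_
    simp [coeff_X_pow, apply_ite Matrix.transpose, mul_ite, Finset.sum_ite_eq',
      Nat.lt_succ_self]
  rw [h1]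
  exact (pair16_extend m f.coeff
    (fun a ha => coeff_eq_zero_of_natDegree_lt (by omega)) hN).symm

lemma ip16_expand (m : ℕ → Mat p) (f g : Polynomial (Mat p)) :
    ip16 m f g = ∑ b ∈ range (g.natDegree + 1),
      pair16 m f.coeff (f.natDegree + 1) b * (g.coeff b)ᵀ := by
  unfold ip16 pair16
  rw [Finset.sum_comm]
  exact Finset.sum_congr rfl fun b _ => (Finset.sum_mul _ _ _).symm

section WithQ

variable [Nonempty (Fin p)] (m : ℕ → Mat p) (Q : ℕ → Polynomial (Mat p))
  (hsym : ∀ k, (m k)ᵀ = m k)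
  (hmonic : ∀ n, (Q n).Monic ∧ (Q n).natDegree = n)
  (horth : ∀ n, ∀ k < n, ip16 m (Q n) (X ^ k) = 0)

include hmonic horth

lemma ip16_self (n : ℕ) : ip16 m (Q n) (Q n) = ip16 m (Q n) (X ^ n) := by
  have hd := (hmonic n).2
  have hc : (Q n).coeff n = 1 := by
    have := (hmonic n).1.coeff_natDegree; rwa [hd] at this
  rw [ip16_expand, hd, ip16_X_pow m (Q n) n (n + 1) (by omega)]
  refine Finset.sum_eq_single_of_mem n (self_mem_range_succ n) ?_ |>.trans ?_
  · intro b hbm hb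
    have hb' : b < n := by have := mem_range.mp hbm; omega
    rw [← ip16_X_pow m (Q n) b (n + 1) (by omega), horth n b hb', zero_mul]
  · rw [hc, Matrix.transpose_one, mul_one]

variable (hH : ∀ n, IsUnit (ip16 m (Q n) (Q n)))

include hsym hH

lemma top_vanish (d : ℕ) (g : ℕ → Mat p)
    (hpair : ∀ k, k ≤ d → pair16 m g (d + 1) k = 0) : g d = 0 := by
  have hip : ∀ a, (∑ k ∈ range (d + 1), m (a + k) * ((Q d).coeff k)ᵀ)
      = (ip16 m (Q d) (X ^ a))ᵀ := by
    intro a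
    rw [ip16_X_pow m (Q d) a (d + 1) (by rw [(hmonic d).2]; omega)]
    unfold pair16
    rw [Matrix.transpose_sum]
    refine Finset.sum_congr rfl fun k _ => ?_
    rw [Matrix.transpose_mul, hsym, Nat.add_comm k a]
  have hS : (0 : Mat p) = g d * (ip16 m (Q d) (X ^ d))ᵀ := by
    calc (0 : Mat p) = ∑ k ∈ range (d + 1), pair16 m g (d + 1) k * ((Q d).coeff k)ᵀ := by
          refine (Finset.sum_eq_zero fun k hk => ?_).symm
          rw [hpair k (by have := mem_range.mp hk; omega), zero_mul]
      _ = ∑ a ∈ range (d + 1), g a * (∑ k ∈ range (d + 1), m (a + k) * ((Q d).coeff k)ᵀ) := by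
          unfold pair16
          simp only [Finset.sum_mul]
          rw [Finset.sum_comm]
          simp only [Finset.mul_sum, mul_assoc]
      _ = ∑ a ∈ range (d + 1), g a * (ip16 m (Q d) (X ^ a))ᵀ := by
          refine Finset.sum_congr rfl fun a _ => ?_; rw [hip a]
      _ = g d * (ip16 m (Q d) (X ^ d))ᵀ := by
          refine Finset.sum_eq_single_of_mem d (self_mem_range_succ d) ?_
          intro b hbm hb
          have hb' : b < d := by have := mem_range.mp hbm; omega
          rw [horth d b hb', Matrix.transpose_zero, mul_zero]
  rw [← ip16_self m Q hmonic horth d] at hS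
  have hu : IsUnit ((ip16 m (Q d) (Q d))ᵀ) := by
    rw [Matrix.isUnit_iff_isUnit_det, Matrix.det_transpose, ← Matrix.isUnit_iff_isUnit_det]
    exact hH d
  have := congrArg (fun A : Mat p => A * Ring.inverse ((ip16 m (Q d) (Q d))ᵀ)) hS
  simpa [mul_assoc, Ring.mul_inverse_cancel _ hu] using this.symm

lemma vanish : ∀ (d : ℕ) (g : ℕ → Mat p), (∀ k, d < k → g k = 0) →
    (∀ k, k ≤ d → pair16 m g (d + 1) k = 0) → ∀ k, g k = 0 := by
  intro d
  induction d with
  | zero =>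
    intro g hg hp k
    rcases Nat.eq_zero_or_pos k with rfl | hk
    · exact top_vanish m Q hsym hmonic horth hH 0 g hp
    · exact hg k hk
  | succ d ih =>
    intro g hg hp k
    have hgd : g (d + 1) = 0 := top_vanish m Q hsym hmonic horth hH (d + 1) g hp
    refine ih g ?_ ?_ k
    · intro j hj
      rcases eq_or_lt_of_le (show d + 1 ≤ j by omega) with rfl | hj'
      · exact hgd
      · exact hg j hj'
    · intro j hj
      have h0 := hp j (by omega)
      unfold pair16 at h0 ⊢
      rw [Finset.sum_range_succ, hgd, zero_mul, add_zero] at h0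
      exact h0

lemma coeff_parity (hodd : ∀ j, j % 2 = 1 → m j = 0) :
    ∀ n k, (n + k) % 2 = 1 → (Q n).coeff k = 0 := by
  intro n k hnk
  rcases Nat.eq_zero_or_pos n with rfl | hn
  · exact coeff_eq_zero_of_natDegree_lt (by rw [(hmonic 0).2]; omega)
  · set g : ℕ → Mat p := fun j => ((-1 : ℝ) ^ (n + j) - 1) • (Q n).coeff j with hg
    have hcn : (Q n).coeff n = 1 := by
      have := (hmonic n).1.coeff_natDegree; rwa [(hmonic n).2] at this
    have hvan : ∀ j, g j = 0 := by
      refine vanish m Q hsym hmonic horth hH (n - 1) g ?_ ?_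
      · intro j hj
        rcases eq_or_lt_of_le (show n ≤ j by omega) with rfl | hj'
        · have he : ((-1 : ℝ) ^ (n + n) - 1) = 0 := by
            rw [(Even.add_self n).neg_one_pow]; ring
          simp [hg, he]
        · simp [hg, coeff_eq_zero_of_natDegree_lt (show (Q n).natDegree < j by
            rw [(hmonic n).2]; omega)]
      · intro j hj
        rw [show n - 1 + 1 = n by omega]
        unfold pair16
        have hterm : ∀ a, g a * m (a + j)
            = ((-1 : ℝ) ^ (n + j) - 1) • ((Q n).coeff a * m (a + j)) := by
          intro a
          rcases Nat.even_or_odd (a + j) with he | ho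
          · have h1 : (n + a) % 2 = (n + j) % 2 := by
              have := Nat.even_iff.mp he; omega
            rw [hg]
            simp only [smul_mul_assoc]
            rw [neg_one_pow_mod (n + a) (n + j) h1]
          · rw [hodd (a + j) (Nat.odd_iff.mp ho), mul_zero, mul_zero, smul_zero]
        rw [Finset.sum_congr rfl fun a _ => hterm a, ← Finset.smul_sum]
        have hsum : ∑ a ∈ range n, (Q n).coeff a * m (a + j) = -m (n + j) := by
          have h0 : pair16 m (Q n).coeff (n + 1) j = 0 := by
            rw [← ip16_X_pow m (Q n) j (n + 1) (by rw [(hmonic n).2]; omega)]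
            exact horth n j (by omega)
          unfold pair16 at h0
          rw [Finset.sum_range_succ, hcn, one_mul] at h0
          exact eq_neg_of_add_eq_zero_left h0
        rw [hsum]
        rcases Nat.even_or_odd (n + j) with h2 | h2
        · rw [show ((-1 : ℝ) ^ (n + j) - 1) = 0 by rw [h2.neg_one_pow]; ring, zero_smul]
        · rw [hodd (n + j) (Nat.odd_iff.mp h2), neg_zero, smul_zero]
    have h : ((-1 : ℝ) ^ (n + k) - 1) • (Q n).coeff k = 0 := hvan k
    have hs : ((-1 : ℝ) ^ (n + k) - 1) = -2 := by
      rw [(Nat.odd_iff.mpr hnk).neg_one_pow]; ring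
    rw [hs] at h
    ext i jj
    have h2 := congrFun (congrFun h i) jj
    simp only [Matrix.smul_apply, Matrix.zero_apply, smul_eq_mul] at h2
    have : (Q n).coeff k i jj = 0 := by linarith
    simpa using this

lemma ip16_X_odd (hodd : ∀ j, j % 2 = 1 → m j = 0) (n j : ℕ) (h : (n + j) % 2 = 1) :
    ip16 m (Q n) (X ^ j) = 0 := by
  rw [ip16_X_pow m (Q n) j (n + 1) (by rw [(hmonic n).2]; omega)]
  refine Finset.sum_eq_zero fun a _ => ?_
  by_cases h2 : (n + a) % 2 = 1
  · rw [coeff_parity m Q hsym hmonic horth hH hodd n a h2, zero_mul]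
  · rw [hodd (a + j) (by omega), mul_zero]

end WithQ

section Key

variable [Nonempty (Fin p)] (m : ℝ → ℕ → Mat p) (Q : ℝ → ℕ → Polynomial (Mat p))
  (hsym : ∀ t k, (m t k)ᵀ = m t k)
  (hodd : ∀ t k, m t (2 * k + 1) = 0)
  (hmom : ∀ k t i j, HasDerivAt (fun s => m s k i j) (m t (k + 2) i j) t)
  (hmonic : ∀ t n, (Q t n).Monic ∧ (Q t n).natDegree = n)
  (horth : ∀ t n, ∀ k < n, ip16 (m t) (Q t n) (X ^ k) = 0)
  (hHall : ∀ t n, IsUnit (ip16 (m t) (Q t n) (Q t n)))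
  (hdiff : ∀ n k i j t, DifferentiableAt ℝ (fun s => (Q s n).coeff k i j) t)

include hsym hodd hmom hmonic horth hHall hdiff

lemma key (t : ℝ) (N : ℕ) (hN : 2 ≤ N) (k : ℕ) (i j : Fin p) :
    deriv (fun s => (Q s N).coeff k i j) t =
      ((-(ip16 (m t) (Q t N) (Q t N) *
          Ring.inverse (ip16 (m t) (Q t (N - 2)) (Q t (N - 2))))) *
        (Q t (N - 2)).coeff k) i j := by
  have hodd' : ∀ t j, j % 2 = 1 → m t j = 0 := by
    intro t j hj
    obtain ⟨c, rfl⟩ : ∃ c, j = 2 * c + 1 := ⟨j / 2, by omega⟩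
    exact hodd t c
  set c : Mat p := -(ip16 (m t) (Q t N) (Q t N) *
      Ring.inverse (ip16 (m t) (Q t (N - 2)) (Q t (N - 2)))) with hc
  set dQ : ℕ → Mat p := fun k => Matrix.of fun i j => deriv (fun s => (Q s N).coeff k i j) t
    with hdQ
  suffices h : ∀ k, dQ k = c * (Q t (N - 2)).coeff k by
    exact congrFun (congrFun (h k) i) j
  have hcoeffN : ∀ s : ℝ, (Q s N).coeff N = 1 := fun s => by
    have := (hmonic s N).1.coeff_natDegree; rwa [(hmonic s N).2] at this
  have hcoeff_hi : ∀ (s : ℝ) k, N < k → (Q s N).coeff k = 0 := fun s k h =>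
    coeff_eq_zero_of_natDegree_lt (by rw [(hmonic s N).2]; exact h)
  -- dQ vanishes at indices ≥ N
  have hdQ0 : ∀ k, N ≤ k → dQ k = 0 := by
    intro a ha
    ext i j
    show deriv (fun s => (Q s N).coeff a i j) t = (0 : Mat p) i j
    have hconst : (fun s => (Q s N).coeff a i j) = fun _ => (Q t N).coeff a i j := by
      funext s
      rcases eq_or_lt_of_le ha with h | h
      · rw [← h, hcoeffN s, hcoeffN t]
      · rw [hcoeff_hi s a h, hcoeff_hi t a h]
    rw [hconst, deriv_const]
    simp
  -- derivative of the orthogonality relation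
  have hLd : ∀ k, k < N → pair16 (m t) dQ (N + 1) k
      = -pair16 (m t) (fun a => (Q t N).coeff a) (N + 1) (k + 2) := by
    intro k hk
    have hzero : ∀ s : ℝ, pair16 (m s) (fun a => (Q s N).coeff a) (N + 1) k = 0 := by
      intro s
      rw [← ip16_X_pow (m s) (Q s N) k (N + 1) (by rw [(hmonic s N).2]; omega)]
      exact horth s N k hk
    have hder : ∀ i j, HasDerivAt
        (fun s => (pair16 (m s) (fun a => (Q s N).coeff a) (N + 1) k) i j)
        ((pair16 (m t) dQ (N + 1) k
          + pair16 (m t) (fun a => (Q t N).coeff a) (N + 1) (k + 2)) i j) t := by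
      intro i j
      have hfun : (fun s => (pair16 (m s) (fun a => (Q s N).coeff a) (N + 1) k) i j)
          = fun s => ∑ a ∈ range (N + 1), ∑ u, (Q s N).coeff a i u * m s (a + k) u j := by
        funext s
        simp [pair16, Matrix.sum_apply, Matrix.mul_apply]
      have hval : (pair16 (m t) dQ (N + 1) k
            + pair16 (m t) (fun a => (Q t N).coeff a) (N + 1) (k + 2)) i j
          = ∑ a ∈ range (N + 1), ∑ u,
              (dQ a i u * m t (a + k) u j + (Q t N).coeff a i u * m t (a + k + 2) u j) := by
        simp [pair16, Matrix.add_apply, Matrix.sum_apply, Matrix.mul_apply,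
          Finset.sum_add_distrib, Nat.add_assoc]
      rw [hfun, hval]
      exact HasDerivAt.fun_sum fun a _ => HasDerivAt.fun_sum fun u _ =>
        ((hdiff N a i u t).hasDerivAt.mul (hmom (a + k) t u j))
    have hEq : pair16 (m t) dQ (N + 1) k
        + pair16 (m t) (fun a => (Q t N).coeff a) (N + 1) (k + 2) = 0 := by
      ext i j
      have h1 := hder i j
      have h2 : HasDerivAt
          (fun s => (pair16 (m s) (fun a => (Q s N).coeff a) (N + 1) k) i j) 0 t := by
        have : (fun s => (pair16 (m s) (fun a => (Q s N).coeff a) (N + 1) k) i j)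
            = fun _ => (0 : ℝ) := funext fun s => by rw [hzero s]; simp
        rw [this]; exact hasDerivAt_const t 0
      have := h1.unique h2
      simpa using this
    exact eq_neg_of_add_eq_zero_left hEq
  have hQpair : ∀ jj : ℕ, pair16 (m t) (fun a => (Q t N).coeff a) (N + 1) jj
      = ip16 (m t) (Q t N) (X ^ jj) := fun jj =>
    (ip16_X_pow (m t) (Q t N) jj (N + 1) (by rw [(hmonic t N).2]; omega)).symm
  have hXN1 : ip16 (m t) (Q t N) (X ^ (N + 1)) = 0 :=
    ip16_X_odd (m t) (Q t) (hsym t) (hmonic t) (horth t) (hHall t) (hodd' t) N (N + 1)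
      (by omega)
  have hB : ∀ k, pair16 (m t) (fun a => c * (Q t (N - 2)).coeff a) N k
      = c * ip16 (m t) (Q t (N - 2)) (X ^ k) := by
    intro k
    rw [ip16_X_pow (m t) (Q t (N - 2)) k N (by rw [(hmonic t (N - 2)).2]; omega)]
    unfold pair16
    rw [Finset.mul_sum]
    exact Finset.sum_congr rfl fun a _ => mul_assoc _ _ _
  have hRg : ∀ k, (fun jj => dQ jj - c * (Q t (N - 2)).coeff jj) k = 0 := by
    refine vanish (m t) (Q t) (hsym t) (hmonic t) (horth t) (hHall t) (N - 1) _ ?_ ?_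
    · intro k hk
      have hk' : N ≤ k := by omega
      have hco : (Q t (N - 2)).coeff k = 0 :=
        coeff_eq_zero_of_natDegree_lt (by rw [(hmonic t (N - 2)).2]; omega)
      simp [hdQ0 k hk', hco]
    · intro k hk
      rw [show N - 1 + 1 = N by omega]
      have hsplit : pair16 (m t) (fun jj => dQ jj - c * (Q t (N - 2)).coeff jj) N k
          = pair16 (m t) dQ N k
            - pair16 (m t) (fun a => c * (Q t (N - 2)).coeff a) N k := by
        unfold pair16
        rw [← Finset.sum_sub_distrib]
        exact Finset.sum_congr rfl fun a _ => sub_mul _ _ _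
      have hA : pair16 (m t) dQ N k = -ip16 (m t) (Q t N) (X ^ (k + 2)) := by
        have h1 : pair16 (m t) dQ (N + 1) k = pair16 (m t) dQ N k :=
          pair16_extend (m t) dQ (fun a ha => hdQ0 a ha) (Nat.le_succ N)
        rw [← h1, hLd k (by omega), hQpair (k + 2)]
      rw [hsplit, hA, hB k]
      rcases show k < N - 2 ∨ k = N - 2 ∨ k = N - 1 by omega with h | h | h
      · rw [horth t (N - 2) k h, horth t N (k + 2) (by omega)]
        simp
      · subst h
        rw [show N - 2 + 2 = N by omega]
        rw [← ip16_self (m t) (Q t) (hmonic t) (horth t) N,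
          ← ip16_self (m t) (Q t) (hmonic t) (horth t) (N - 2)]
        rw [hc, neg_mul, mul_assoc,
          Ring.inverse_mul_cancel _ (hHall t (N - 2)), mul_one]
        simp
      · subst h
        rw [show N - 1 + 2 = N + 1 by omega, hXN1]
        rw [ip16_X_odd (m t) (Q t) (hsym t) (hmonic t) (horth t) (hHall t) (hodd' t)
          (N - 2) (N - 1) (by omega)]
        simp
  intro k
  have := hRg k
  simpa [sub_eq_zero] using this

end Key

end Stmt16

/-- Time evolution for an even symmetric matrix measure with `∂_t dμ = x² dμ`
(moments evolve as `∂_t m_k = m_{k+2}`): the monic matrix orthogonal polynomials satisfy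
`∂_t Q_{2n} = α_n Q_{2n-2}` and `∂_t Q_{2n+1} = β_n Q_{2n-1}` with
`α_n = -H_n^{(0)} (H_{n-1}^{(0)})⁻¹`, `β_n = -H_n^{(1)} (H_{n-1}^{(1)})⁻¹`;
for `n = 0` (convention `Q_{-1} = Q_{-2} = 0`) the derivatives vanish.
Derivatives of matrix entries are taken entrywise. -/
theorem stmt16 {p : ℕ} (m : ℝ → ℕ → Matrix (Fin p) (Fin p) ℝ)
    (hsym : ∀ t k, (m t k)ᵀ = m t k)
    (hodd : ∀ t k, m t (2 * k + 1) = 0)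
    (hmom : ∀ k t i j, HasDerivAt (fun s => m s k i j) (m t (k + 2) i j) t)
    (Q : ℝ → ℕ → Polynomial (Matrix (Fin p) (Fin p) ℝ))
    (hmonic : ∀ t n, (Q t n).Monic ∧ (Q t n).natDegree = n)
    (horth : ∀ t n, ∀ k < n, ip16 (m t) (Q t n) (X ^ k) = 0)
    (hH0 : ∀ t n, IsUnit (ip16 (m t) (Q t (2 * n)) (Q t (2 * n))))
    (hH1 : ∀ t n, IsUnit (ip16 (m t) (Q t (2 * n + 1)) (Q t (2 * n + 1))))
    (hdiff : ∀ n k i j t, DifferentiableAt ℝ (fun s => (Q s n).coeff k i j) t) :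
    (∀ t k i j, deriv (fun s => (Q s 0).coeff k i j) t = 0) ∧
    (∀ t k i j, deriv (fun s => (Q s 1).coeff k i j) t = 0) ∧
    (∀ n : ℕ, 1 ≤ n → ∀ t k i j,
      deriv (fun s => (Q s (2 * n)).coeff k i j) t =
        ((-(ip16 (m t) (Q t (2 * n)) (Q t (2 * n)) *
            Ring.inverse (ip16 (m t) (Q t (2 * (n - 1))) (Q t (2 * (n - 1)))))) *
          (Q t (2 * (n - 1))).coeff k) i j) ∧
    (∀ n : ℕ, 1 ≤ n → ∀ t k i j,
      deriv (fun s => (Q s (2 * n + 1)).coeff k i j) t =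
        ((-(ip16 (m t) (Q t (2 * n + 1)) (Q t (2 * n + 1)) *
            Ring.inverse (ip16 (m t) (Q t (2 * (n - 1) + 1)) (Q t (2 * (n - 1) + 1))))) *
          (Q t (2 * (n - 1) + 1)).coeff k) i j) := by
  rcases Nat.eq_zero_or_pos p with rfl | hp
  · exact ⟨fun t k i j => i.elim0, fun t k i j => i.elim0,
      fun n _ t k i j => i.elim0, fun n _ t k i j => i.elim0⟩
  haveI : Nonempty (Fin p) := ⟨⟨0, hp⟩⟩
  have hHall : ∀ t n, IsUnit (ip16 (m t) (Q t n) (Q t n)) := by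
    intro t n
    rcases Nat.even_or_odd n with ⟨c, hc⟩ | ⟨c, hc⟩
    · obtain rfl : n = 2 * c := by omega
      exact hH0 t c
    · obtain rfl : n = 2 * c + 1 := by omega
      exact hH1 t c
  have hodd' : ∀ t j, j % 2 = 1 → m t j = 0 := by
    intro t j hj
    obtain ⟨c, rfl⟩ : ∃ c, j = 2 * c + 1 := ⟨j / 2, by omega⟩
    exact hodd t c
  have hpar : ∀ t n k, (n + k) % 2 = 1 → (Q t n).coeff k = 0 := fun t =>
    Stmt16.coeff_parity (m t) (Q t) (hsym t) (hmonic t) (horth t) (hHall t) (hodd' t)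
  have hkey := Stmt16.key m Q hsym hodd hmom hmonic horth hHall hdiff
  refine ⟨?_, ?_, ?_, ?_⟩
  · intro t k i j
    have hconst : (fun s => (Q s 0).coeff k i j) = fun _ => (Q t 0).coeff k i j := by
      funext s
      rcases Nat.eq_zero_or_pos k with rfl | hk
      · have h1 : (Q s 0).coeff 0 = 1 := by
          have := (hmonic s 0).1.coeff_natDegree; rwa [(hmonic s 0).2] at this
        have h2 : (Q t 0).coeff 0 = 1 := by
          have := (hmonic t 0).1.coeff_natDegree; rwa [(hmonic t 0).2] at this
        rw [h1, h2]
      · rw [coeff_eq_zero_of_natDegree_lt (by rw [(hmonic s 0).2]; omega),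
          coeff_eq_zero_of_natDegree_lt (by rw [(hmonic t 0).2]; omega)]
    rw [hconst, deriv_const]
  · intro t k i j
    have hconst : (fun s => (Q s 1).coeff k i j) = fun _ => (Q t 1).coeff k i j := by
      funext s
      rcases show k = 0 ∨ k = 1 ∨ 1 < k by omega with rfl | rfl | hk
      · rw [hpar s 1 0 (by omega), hpar t 1 0 (by omega)]
      · have h1 : (Q s 1).coeff 1 = 1 := by
          have := (hmonic s 1).1.coeff_natDegree; rwa [(hmonic s 1).2] at this
        have h2 : (Q t 1).coeff 1 = 1 := by
          have := (hmonic t 1).1.coeff_natDegree; rwa [(hmonic t 1).2] at this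
        rw [h1, h2]
      · rw [coeff_eq_zero_of_natDegree_lt (by rw [(hmonic s 1).2]; omega),
          coeff_eq_zero_of_natDegree_lt (by rw [(hmonic t 1).2]; omega)]
    rw [hconst, deriv_const]
  · intro n hn t k i j
    have h := hkey t (2 * n) (by omega) k i j
    rw [show 2 * (n - 1) = 2 * n - 2 by omega]
    exact h
  · intro n hn t k i j
    have h := hkey t (2 * n + 1) (by omega) k i j
    rw [show 2 * (n - 1) + 1 = 2 * n + 1 - 2 by omega]
    exact h
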